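/- Let {F^{ij}} and {G^{ij}} be two compatible families of fundamental matrices indexed by the same set of pairs on indices 1,…,n. Then {F^{ij}} and {G^{ij}} are equivalent under the fundamental action — i.e., there exist H₁,…,Hₙ ∈ GL₃(ℝ) and nonzero scalars λ_{ij} with G^{ij} = λ_{ij} Hᵢᵀ F^{ij} Hⱼ for all indexing pairs — if and only if there exist a solution {Pᵢ} of {F^{ij}}, a solution {Qᵢ} of {G^{ij}}, and H ∈ GL₄(ℝ) such that ker Qᵢ = H⁻¹ (ker Pᵢ) for every i (i.e., the camera centers of the two solutions are equivalent under a projective transformation). -/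

import Mathlib

open Matrix

/-- The 6×6 matrix whose first three rows form the block `[P₁ | x | 0]` and whose last
three rows form the block `[P₂ | 0 | y]`. -/
noncomputable def bigMat (P₁ P₂ : Matrix (Fin 3) (Fin 4) ℝ) (x y : Fin 3 → ℝ) :
    Matrix (Fin 6) (Fin 6) ℝ :=
  fun i j =>
    if hi : (i : ℕ) < 3 then
      if hj : (j : ℕ) < 4 then P₁ ⟨(i : ℕ), hi⟩ ⟨(j : ℕ), hj⟩
      else if (j : ℕ) = 4 then x ⟨(i : ℕ), hi⟩ else 0
    else
      if hj : (j : ℕ) < 4 then P₂ ⟨(i : ℕ) - 3, by have := i.isLt; omega⟩ ⟨(j : ℕ), hj⟩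
      else if (j : ℕ) = 4 then 0
      else y ⟨(i : ℕ) - 3, by have := i.isLt; omega⟩

/-- `psi P₁ P₂` is the unique 3×3 matrix `F` such that for all `x y : ℝ³`,
`xᵀ F y = det [P₁ | x | 0; P₂ | 0 | y]`.  (Since the determinant is bilinear in `(x, y)`,
this matrix is obtained by evaluating at pairs of standard basis vectors.) -/
noncomputable def psi (P₁ P₂ : Matrix (Fin 3) (Fin 4) ℝ) : Matrix (Fin 3) (Fin 3) ℝ :=
  fun a b => (bigMat P₁ P₂ (Pi.single a 1) (Pi.single b 1)).det

/-- A camera is a real 3×4 matrix of rank 3. -/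
def IsCamera (P : Matrix (Fin 3) (Fin 4) ℝ) : Prop := P.rank = 3

/-- `P` is a solution of the family `F` indexed by the edges `E`. -/
def IsSolutionOf (n : ℕ) (E : Fin n → Fin n → Prop)
    (F : Fin n → Fin n → Matrix (Fin 3) (Fin 3) ℝ)
    (P : Fin n → Matrix (Fin 3) (Fin 4) ℝ) : Prop :=
  (∀ i, IsCamera (P i)) ∧
    ∃ lam : Fin n → Fin n → ℝ,
      ∀ i j, E i j → lam i j ≠ 0 ∧ lam i j • F i j = psi (P i) (P j)

def col4 (x : Fin 3 → ℝ) : Fin 6 → ℝ :=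
  fun i => if h : (i : ℕ) < 3 then x ⟨i, h⟩ else 0
def col5 (y : Fin 3 → ℝ) : Fin 6 → ℝ :=
  fun i => if h : (i : ℕ) < 3 then 0 else y ⟨(i : ℕ) - 3, by have := i.isLt; omega⟩

lemma bigMat_eq_update (P₁ P₂ : Matrix (Fin 3) (Fin 4) ℝ) (x y x' y' : Fin 3 → ℝ) :
    bigMat P₁ P₂ x y =
      ((bigMat P₁ P₂ x' y').updateCol 4 (col4 x)).updateCol 5 (col5 y) := by
  ext i j
  fin_cases j <;>
    simp [bigMat, updateCol_apply, col4, col5, Fin.isValue, show ((3:Fin 6):ℕ)=3 from rfl, show ((0:Fin 6):ℕ)=0 from rfl, show ((1:Fin 6):ℕ)=1 from rfl, show ((2:Fin 6):ℕ)=2 from rfl, show ((4:Fin 6):ℕ)=4 from rfl, show ((5:Fin 6):ℕ)=5 from rfl]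

lemma updateColumn_swap (M : Matrix (Fin 6) (Fin 6) ℝ) (a b : Fin 6 → ℝ) :
    (M.updateCol 4 a).updateCol 5 b = (M.updateCol 5 b).updateCol 4 a := by
  ext i j
  simp only [updateCol_apply]
  split_ifs with h1 h2 <;> simp_all

lemma det_update_sum (j : Fin 6) (A : Matrix (Fin 6) (Fin 6) ℝ) (c : Fin 3 → ℝ)
    (f : Fin 3 → (Fin 6 → ℝ)) :
    (A.updateCol j (∑ a, c a • f a)).det = ∑ a, c a * (A.updateCol j (f a)).det := by
  rw [Fin.sum_univ_three, Fin.sum_univ_three]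
  rw [det_updateCol_add, det_updateCol_add, det_updateCol_smul,
    det_updateCol_smul, det_updateCol_smul]

lemma col4_decomp (x : Fin 3 → ℝ) : col4 x = ∑ a, x a • col4 (Pi.single a 1) := by
  ext i
  simp only [Finset.sum_apply, Pi.smul_apply, col4, smul_eq_mul]
  split_ifs with h
  · simp [Pi.single_apply]
  · simp

lemma col5_decomp (y : Fin 3 → ℝ) : col5 y = ∑ b, y b • col5 (Pi.single b 1) := by
  ext i
  simp only [Finset.sum_apply, Pi.smul_apply, col5, smul_eq_mul]
  split_ifs with h
  · simp
  · simp [Pi.single_apply]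

lemma det_bigMat (P₁ P₂ : Matrix (Fin 3) (Fin 4) ℝ) (x y : Fin 3 → ℝ) :
    (bigMat P₁ P₂ x y).det = x ⬝ᵥ (psi P₁ P₂ *ᵥ y) := by
  rw [bigMat_eq_update P₁ P₂ x y 0 0, col5_decomp, det_update_sum]
  have h1 : ∀ b : Fin 3,
      (((bigMat P₁ P₂ 0 0).updateCol 4 (col4 x)).updateCol 5
        (col5 (Pi.single b 1))).det
      = ∑ a, x a * (psi P₁ P₂) a b := by
    intro b
    rw [updateColumn_swap, col4_decomp, det_update_sum]
    refine Finset.sum_congr rfl fun a _ => ?_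
    rw [← updateColumn_swap, ← bigMat_eq_update P₁ P₂ (Pi.single a 1) (Pi.single b 1) 0 0]
    simp only [psi]
  simp only [h1]
  simp only [dotProduct, mulVec, dotProduct, Finset.mul_sum, Finset.sum_mul]
  rw [Finset.sum_comm]
  refine Finset.sum_congr rfl fun b _ => Finset.sum_congr rfl fun a _ => by ring

lemma bilinear_eq {M N : Matrix (Fin 3) (Fin 3) ℝ}
    (h : ∀ x y : Fin 3 → ℝ, x ⬝ᵥ (M *ᵥ y) = x ⬝ᵥ (N *ᵥ y)) : M = N := by
  ext a b
  have := h (Pi.single a 1) (Pi.single b 1)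
  simpa [single_dotProduct, Matrix.mulVec_single] using this

/-- block diag (A, I₂) -/
def Dmat (A : Matrix (Fin 4) (Fin 4) ℝ) : Matrix (Fin 6) (Fin 6) ℝ :=
  fun i j =>
    if hi : (i : ℕ) < 4 then
      (if hj : (j : ℕ) < 4 then A ⟨i, hi⟩ ⟨j, hj⟩ else 0)
    else if (i : ℕ) = (j : ℕ) then 1 else 0

lemma Dmat_eq (A : Matrix (Fin 4) (Fin 4) ℝ) :
    Dmat A = (Matrix.fromBlocks A 0 0 (1 : Matrix (Fin 2) (Fin 2) ℝ)).submatrix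
      finSumFinEquiv.symm finSumFinEquiv.symm := by
  ext i j
  fin_cases i <;> fin_cases j <;> rfl

lemma det_Dmat (A : Matrix (Fin 4) (Fin 4) ℝ) : (Dmat A).det = A.det := by
  rw [Dmat_eq, Matrix.det_submatrix_equiv_self, Matrix.det_fromBlocks_zero₂₁]
  simp

/-- block diag (B₁, B₂) -/
def Emat (B₁ B₂ : Matrix (Fin 3) (Fin 3) ℝ) : Matrix (Fin 6) (Fin 6) ℝ :=
  fun i j =>
    if hi : (i : ℕ) < 3 then
      (if hj : (j : ℕ) < 3 then B₁ ⟨i, hi⟩ ⟨j, hj⟩ else 0)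
    else if hj : (j : ℕ) < 3 then 0
    else B₂ ⟨(i : ℕ) - 3, by have := i.isLt; omega⟩ ⟨(j : ℕ) - 3, by have := j.isLt; omega⟩

lemma Emat_eq (B₁ B₂ : Matrix (Fin 3) (Fin 3) ℝ) :
    Emat B₁ B₂ = (Matrix.fromBlocks B₁ 0 0 B₂).submatrix
      finSumFinEquiv.symm finSumFinEquiv.symm := by
  ext i j
  fin_cases i <;> fin_cases j <;> rfl

lemma det_Emat (B₁ B₂ : Matrix (Fin 3) (Fin 3) ℝ) :
    (Emat B₁ B₂).det = B₁.det * B₂.det := by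
  rw [Emat_eq, Matrix.det_submatrix_equiv_self, Matrix.det_fromBlocks_zero₂₁]

def Xmat (x : Fin 3 → ℝ) : Matrix (Fin 3) (Fin 2) ℝ := fun i j => if j = 0 then x i else 0
def Ymat (y : Fin 3 → ℝ) : Matrix (Fin 3) (Fin 2) ℝ := fun i j => if j = 0 then 0 else y i

lemma bigMat_blocks (P₁ P₂ : Matrix (Fin 3) (Fin 4) ℝ) (x y : Fin 3 → ℝ) :
    bigMat P₁ P₂ x y = (Matrix.fromBlocks P₁ (Xmat x) P₂ (Ymat y)).submatrix
      finSumFinEquiv.symm finSumFinEquiv.symm := by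
  ext i j
  fin_cases i <;> fin_cases j <;> rfl

lemma mul_Xmat (B : Matrix (Fin 3) (Fin 3) ℝ) (x : Fin 3 → ℝ) :
    B * Xmat x = Xmat (B *ᵥ x) := by
  ext i j
  fin_cases j <;> simp [Xmat, Matrix.mul_apply, Matrix.mulVec, dotProduct]

lemma mul_Ymat (B : Matrix (Fin 3) (Fin 3) ℝ) (y : Fin 3 → ℝ) :
    B * Ymat y = Ymat (B *ᵥ y) := by
  ext i j
  fin_cases j <;> simp [Ymat, Matrix.mul_apply, Matrix.mulVec, dotProduct]

lemma bigMat_mul_D (P₁ P₂ : Matrix (Fin 3) (Fin 4) ℝ) (A : Matrix (Fin 4) (Fin 4) ℝ)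
    (x y : Fin 3 → ℝ) :
    bigMat (P₁ * A) (P₂ * A) x y = bigMat P₁ P₂ x y * Dmat A := by
  rw [bigMat_blocks, bigMat_blocks, Dmat_eq, Matrix.submatrix_mul_equiv,
    Matrix.fromBlocks_multiply]
  simp

lemma E_mul_bigMat (B₁ B₂ : Matrix (Fin 3) (Fin 3) ℝ) (P₁ P₂ : Matrix (Fin 3) (Fin 4) ℝ)
    (u v : Fin 3 → ℝ) :
    bigMat (B₁ * P₁) (B₂ * P₂) (B₁ *ᵥ u) (B₂ *ᵥ v) = Emat B₁ B₂ * bigMat P₁ P₂ u v := by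
  rw [bigMat_blocks, bigMat_blocks, Emat_eq, Matrix.submatrix_mul_equiv,
    Matrix.fromBlocks_multiply]
  simp [mul_Xmat, mul_Ymat]

lemma psi_mul_right (P₁ P₂ : Matrix (Fin 3) (Fin 4) ℝ) (A : Matrix (Fin 4) (Fin 4) ℝ) :
    psi (P₁ * A) (P₂ * A) = A.det • psi P₁ P₂ := by
  apply bilinear_eq
  intro x y
  rw [← det_bigMat, bigMat_mul_D, Matrix.det_mul, det_Dmat, det_bigMat, mul_comm]
  simp [Matrix.smul_mulVec, dotProduct_smul, smul_eq_mul, mul_assoc]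

lemma psi_mul_left (B₁ B₂ P₁ P₂ : Matrix _ _ ℝ) :
    B₁ᵀ * psi (B₁ * P₁) (B₂ * P₂) * B₂ = (B₁.det * B₂.det) • psi P₁ P₂ := by
  apply bilinear_eq
  intro u v
  have key : (B₁ *ᵥ u) ⬝ᵥ (psi (B₁ * P₁) (B₂ * P₂) *ᵥ (B₂ *ᵥ v))
      = (B₁.det * B₂.det) * (u ⬝ᵥ (psi P₁ P₂ *ᵥ v)) := by
    rw [← det_bigMat, E_mul_bigMat, Matrix.det_mul, det_Emat, det_bigMat]
  calc u ⬝ᵥ ((B₁ᵀ * psi (B₁ * P₁) (B₂ * P₂) * B₂) *ᵥ v)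
      = u ⬝ᵥ (B₁ᵀ *ᵥ ((psi (B₁ * P₁) (B₂ * P₂) * B₂) *ᵥ v)) := by
        rw [Matrix.mulVec_mulVec, Matrix.mul_assoc]
    _ = (B₁ *ᵥ u) ⬝ᵥ ((psi (B₁ * P₁) (B₂ * P₂) * B₂) *ᵥ v) := by
        rw [Matrix.dotProduct_mulVec, Matrix.vecMul_transpose]
    _ = (B₁ *ᵥ u) ⬝ᵥ (psi (B₁ * P₁) (B₂ * P₂) *ᵥ (B₂ *ᵥ v)) := by
        rw [Matrix.mulVec_mulVec]
    _ = (B₁.det * B₂.det) * (u ⬝ᵥ (psi P₁ P₂ *ᵥ v)) := key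
    _ = u ⬝ᵥ (((B₁.det * B₂.det) • psi P₁ P₂) *ᵥ v) := by
        simp [Matrix.smul_mulVec, dotProduct_smul, smul_eq_mul]

lemma rank3_surj {P : Matrix (Fin 3) (Fin 4) ℝ} (h : P.rank = 3) :
    Function.Surjective P.mulVecLin := by
  rw [← LinearMap.range_eq_top]
  apply Submodule.eq_top_of_finrank_eq
  rw [show Module.finrank ℝ (LinearMap.range P.mulVecLin) = P.rank from rfl, h]
  simp

lemma solve_conj {M N X Y : Matrix (Fin 3) (Fin 3) ℝ} (hM : IsUnit M.det) (hN : IsUnit N.det)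
    (h : M⁻¹ * X * N⁻¹ = Y) : X = M * Y * N := by
  rw [← h, show M * (M⁻¹ * X * N⁻¹) * N = M * M⁻¹ * X * (N⁻¹ * N) by noncomm_ring,
    Matrix.mul_nonsing_inv _ hM, Matrix.nonsing_inv_mul _ hN, Matrix.one_mul, Matrix.mul_one]

lemma solve_conj' {M N X Y : Matrix (Fin 3) (Fin 3) ℝ} (hM : IsUnit M.det) (hN : IsUnit N.det)
    (h : M * X * N = Y) : X = M⁻¹ * Y * N⁻¹ := by
  rw [← h, show M⁻¹ * (M * X * N) * N⁻¹ = M⁻¹ * M * X * (N * N⁻¹) by noncomm_ring,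
    Matrix.nonsing_inv_mul _ hM, Matrix.mul_nonsing_inv _ hN, Matrix.one_mul, Matrix.mul_one]

lemma ker_unit_mul {B : Matrix (Fin 3) (Fin 3) ℝ} (hB : IsUnit B.det)
    (P : Matrix (Fin 3) (Fin 4) ℝ) :
    LinearMap.ker (B * P).mulVecLin = LinearMap.ker P.mulVecLin := by
  rw [Matrix.mulVecLin_mul, LinearMap.ker_comp]
  have hker : LinearMap.ker B.mulVecLin = ⊥ := by
    rw [LinearMap.ker_eq_bot]
    intro x y hxy
    have : B⁻¹ *ᵥ (B *ᵥ x) = B⁻¹ *ᵥ (B *ᵥ y) := by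
      simpa [Matrix.mulVecLin] using congrArg (B⁻¹ *ᵥ ·) hxy
    simpa [Matrix.mulVec_mulVec, Matrix.nonsing_inv_mul _ hB] using this
  rw [hker, Submodule.comap_bot]

lemma exists_left_factor {P Q : Matrix (Fin 3) (Fin 4) ℝ} (hP : P.rank = 3) (hQ : Q.rank = 3)
    (hker : LinearMap.ker Q.mulVecLin = LinearMap.ker P.mulVecLin) :
    ∃ B : Matrix (Fin 3) (Fin 3) ℝ, B.det ≠ 0 ∧ Q = B * P := by
  have hPs := rank3_surj hP
  have hQs := rank3_surj hQ
  obtain ⟨s, hs⟩ := P.mulVecLin.exists_rightInverse_of_surjective (LinearMap.range_eq_top.2 hPs)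
  set b := Q.mulVecLin ∘ₗ s with hb
  have hbP : b ∘ₗ P.mulVecLin = Q.mulVecLin := by
    apply LinearMap.ext; intro x
    have h1 : P.mulVecLin (s (P.mulVecLin x) - x) = 0 := by
      have := congrArg (fun f => f (P.mulVecLin x)) hs
      simp only [LinearMap.comp_apply, LinearMap.id_apply] at this
      rw [map_sub, this, sub_self]
    have h2 : s (P.mulVecLin x) - x ∈ LinearMap.ker Q.mulVecLin := by
      rw [hker]; exact h1
    have h3 : Q.mulVecLin (s (P.mulVecLin x) - x) = 0 := h2
    rw [map_sub, sub_eq_zero] at h3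
    simpa [hb] using h3
  have hbsurj : Function.Surjective b := by
    intro z
    obtain ⟨x, hx⟩ := hQs z
    exact ⟨P.mulVecLin x, by rw [← LinearMap.comp_apply, hbP]; exact hx⟩
  have hbinj : Function.Injective b := LinearMap.injective_iff_surjective.mpr hbsurj
  refine ⟨LinearMap.toMatrix' b, ?_, ?_⟩
  · let e := LinearEquiv.ofBijective b ⟨hbinj, hbsurj⟩
    have h1 : LinearMap.toMatrix' b * LinearMap.toMatrix' (e.symm : (Fin 3 → ℝ) →ₗ[ℝ] (Fin 3 → ℝ))
        = 1 := by
      rw [← LinearMap.toMatrix'_comp, ← LinearMap.toMatrix'_id (R := ℝ) (n := Fin 3)]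
      congr 1
      apply LinearMap.ext; intro x
      exact e.apply_symm_apply x
    intro h0
    have := congrArg Matrix.det h1
    rw [Matrix.det_mul, h0, zero_mul] at this
    simp at this
  · apply Matrix.toLin'.injective
    show Matrix.toLin' Q = Matrix.toLin' (LinearMap.toMatrix' b * P)
    rw [Matrix.toLin'_mul, Matrix.toLin'_toMatrix']
    rw [Matrix.toLin'_apply', Matrix.toLin'_apply', ← hbP]


theorem stmt5 (n : ℕ) (E : Fin n → Fin n → Prop)
    (F G : Fin n → Fin n → Matrix (Fin 3) (Fin 3) ℝ)
    (hF : ∀ i j, E i j → (F i j).rank = 2) (hG : ∀ i j, E i j → (G i j).rank = 2)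
    (hFc : ∃ P, IsSolutionOf n E F P) (hGc : ∃ Q, IsSolutionOf n E G Q) :
    (∃ (H : Fin n → Matrix (Fin 3) (Fin 3) ℝ) (lam : Fin n → Fin n → ℝ),
        (∀ i, (H i).det ≠ 0) ∧
          ∀ i j, E i j → lam i j ≠ 0 ∧ G i j = lam i j • ((H i)ᵀ * F i j * H j)) ↔
      (∃ (P Q : Fin n → Matrix (Fin 3) (Fin 4) ℝ) (H : Matrix (Fin 4) (Fin 4) ℝ),
        IsSolutionOf n E F P ∧ IsSolutionOf n E G Q ∧ H.det ≠ 0 ∧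
          ∀ i, LinearMap.ker (Q i).mulVecLin =
            (LinearMap.ker (P i).mulVecLin).comap H.mulVecLin) := by
  constructor
  · rintro ⟨H, mu, hHdet, hmain⟩
    obtain ⟨P, hPcam, lamF, hlamF⟩ := hFc
    have hHinv : ∀ i, IsUnit (H i).det := fun i => isUnit_iff_ne_zero.mpr (hHdet i)
    have hdetinv : ∀ i, ((H i)⁻¹).det = ((H i).det)⁻¹ := fun i => by
      rw [Matrix.det_nonsing_inv, Ring.inverse_eq_inv]
    have hHinvdet : ∀ i, IsUnit ((H i)⁻¹).det := fun i => by
      rw [hdetinv i]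
      exact isUnit_iff_ne_zero.mpr (inv_ne_zero (hHdet i))
    refine ⟨P, fun i => (H i)⁻¹ * P i, 1, ⟨hPcam, lamF, hlamF⟩, ?_, by simp, ?_⟩
    · refine ⟨fun i => ?_, fun i j =>
        ((H i).det)⁻¹ * ((H j).det)⁻¹ * lamF i j * (mu i j)⁻¹, fun i j hij => ?_⟩
      · show ((H i)⁻¹ * P i).rank = 3
        rw [Matrix.rank_mul_eq_right_of_isUnit_det _ _ (hHinvdet i)]
        exact hPcam i
      · obtain ⟨hmu, hGeq⟩ := hmain i j hij
        obtain ⟨hlF, heqF⟩ := hlamF i j hij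
        refine ⟨mul_ne_zero (mul_ne_zero (mul_ne_zero (inv_ne_zero (hHdet i))
          (inv_ne_zero (hHdet j))) hlF) (inv_ne_zero hmu), ?_⟩
        have key := psi_mul_left (H i)⁻¹ (H j)⁻¹ (P i) (P j)
        rw [Matrix.transpose_nonsing_inv, hdetinv i, hdetinv j, ← heqF] at key
        have hsolve := solve_conj (M := (H i)ᵀ) (N := H j)
          (by rw [Matrix.det_transpose]; exact hHinv i) (hHinv j) key
        show ((H i).det⁻¹ * (H j).det⁻¹ * lamF i j * (mu i j)⁻¹) • G i j
          = psi ((H i)⁻¹ * P i) ((H j)⁻¹ * P j)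
        rw [hsolve, hGeq, smul_smul, smul_smul, Matrix.mul_smul, Matrix.smul_mul]
        congr 1
        field_simp
    · intro i
      show LinearMap.ker ((H i)⁻¹ * P i).mulVecLin = _
      rw [ker_unit_mul (hHinvdet i) (P i), Matrix.mulVecLin_one]
      exact (Submodule.comap_id _).symm
  · rintro ⟨P, Q, H, ⟨hPcam, lamF, hlamF⟩, ⟨hQcam, lamG, hlamG⟩, hHdet, hker⟩
    have hP'cam : ∀ i, (P i * H).rank = 3 := fun i =>
      (Matrix.rank_mul_eq_left_of_isUnit_det H (P i) (isUnit_iff_ne_zero.mpr hHdet)).trans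
        (hPcam i)
    have hP'ker : ∀ i, LinearMap.ker (Q i).mulVecLin = LinearMap.ker (P i * H).mulVecLin := by
      intro i
      rw [hker i, Matrix.mulVecLin_mul, LinearMap.ker_comp]
    have hex : ∀ i, ∃ B : Matrix (Fin 3) (Fin 3) ℝ, B.det ≠ 0 ∧ Q i = B * (P i * H) :=
      fun i => exists_left_factor (hP'cam i) (hQcam i) (hP'ker i)
    choose B hBdet hBQ using hex
    refine ⟨fun i => (B i)⁻¹,
      fun i j => ((B i).det * (B j).det * H.det * lamF i j) * (lamG i j)⁻¹,
      fun i => by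
        rw [Matrix.det_nonsing_inv, Ring.inverse_eq_inv]
        exact inv_ne_zero (hBdet i), fun i j hij => ?_⟩
    obtain ⟨hlF, heqF⟩ := hlamF i j hij
    obtain ⟨hlG, heqG⟩ := hlamG i j hij
    constructor
    · exact mul_ne_zero (mul_ne_zero (mul_ne_zero (mul_ne_zero (hBdet i) (hBdet j)) hHdet)
        hlF) (inv_ne_zero hlG)
    · have key := psi_mul_left (B i) (B j) (P i * H) (P j * H)
      rw [← hBQ i, ← hBQ j, psi_mul_right, ← heqF, ← heqG] at key
      rw [Matrix.mul_smul, Matrix.smul_mul, smul_smul, smul_smul] at key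
      set c : ℝ := (B i).det * (B j).det * H.det * lamF i j with hc
      have key2 : (B i)ᵀ * G i j * B j = ((lamG i j)⁻¹ * c) • F i j := by
        rw [← smul_smul, ← key, smul_smul, inv_mul_cancel₀ hlG, one_smul]
      have hsol := solve_conj' (M := (B i)ᵀ) (N := B j)
        (by rw [Matrix.det_transpose]; exact isUnit_iff_ne_zero.mpr (hBdet i))
        (isUnit_iff_ne_zero.mpr (hBdet j)) key2
      rw [← Matrix.transpose_nonsing_inv, Matrix.mul_smul, Matrix.smul_mul] at hsol
      rw [hsol]
      congr 1
      rw [hc]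
      ring
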